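/- Assume p(s) > 0 for every s ∈ S. Let q_Z be the randomized padding scheme induced by the anchor scheme Z, i.e., q_Z(s,y) = 1 if y = Z(s) and 0 otherwise. Then q_Z is a valid randomized padding scheme with I_∞(q_Z) = log₂ |anchors(S)|, and every valid randomized padding scheme q satisfies I_∞(q) ≥ log₂ |anchors(S)|; hence the anchor scheme minimizes I_∞ over all valid randomized padding schemes. -/
import Mathlib


/-- The anchor set `anchors(T)`: for nonempty `T`, take the element `A T` of `T`
maximizing `n` (the choice is provided by the function `A`, with `hA` guaranteeing
`A T ∈ T`), set `reach(T) = {s' ∈ T : n (A T) ≤ c·n s'}`, and recurse on `T \ reach(T)`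
(note `A T ∈ reach(T)` since `c ≥ 1`, so `T \ reach(T) = T.filter (¬·)` below). -/
noncomputable def anchors {S : Type*} [DecidableEq S] (n : S → ℕ) (c : ℝ)
    (A : Finset S → S) (hc : 1 ≤ c) (hA : ∀ T : Finset S, T.Nonempty → A T ∈ T)
    (T : Finset S) : Finset S :=
  if h : T.Nonempty then
    insert (A T)
      (anchors n c A hc hA (T.filter fun s' => ¬((n (A T) : ℝ) ≤ c * (n s' : ℝ))))
  else ∅
termination_by T.card
decreasing_by
  refine Finset.card_lt_card ((Finset.ssubset_iff_of_subset (Finset.filter_subset _ _)).mpr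
    ⟨A T, hA T h, ?_⟩)
  intro hmem
  exact (Finset.mem_filter.mp hmem).2 (le_mul_of_one_le_left (by positivity) hc)

/-- The anchor scheme `Z`: `Z s = n (A T)` for the unique step of the above recursion
(started at `T = Finset.univ`) at which `s ∈ reach(T)`. -/
noncomputable def anchorPad {S : Type*} [DecidableEq S] (n : S → ℕ) (c : ℝ)
    (A : Finset S → S) (hc : 1 ≤ c) (hA : ∀ T : Finset S, T.Nonempty → A T ∈ T)
    (T : Finset S) (s : S) : ℕ :=
  if h : T.Nonempty then
    if s ∈ T ∧ (n (A T) : ℝ) ≤ c * (n s : ℝ) then n (A T)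
    else anchorPad n c A hc hA (T.filter fun s' => ¬((n (A T) : ℝ) ≤ c * (n s' : ℝ))) s
  else 0
termination_by T.card
decreasing_by
  refine Finset.card_lt_card ((Finset.ssubset_iff_of_subset (Finset.filter_subset _ _)).mpr
    ⟨A T, hA T h, ?_⟩)
  intro hmem
  exact (Finset.mem_filter.mp hmem).2 (le_mul_of_one_le_left (by positivity) hc)

section Lemmas

variable {S : Type*} [DecidableEq S] (n : S → ℕ) (c : ℝ)
    (A : Finset S → S) (hc : 1 ≤ c) (hA : ∀ T : Finset S, T.Nonempty → A T ∈ T)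

include hc hA in
lemma filt_ssub (T : Finset S) (h : T.Nonempty) :
    (T.filter fun s' => ¬((n (A T) : ℝ) ≤ c * (n s' : ℝ))) ⊂ T := by
  refine (Finset.ssubset_iff_of_subset (Finset.filter_subset _ _)).mpr ⟨A T, hA T h, ?_⟩
  intro hmem
  exact (Finset.mem_filter.mp hmem).2 (le_mul_of_one_le_left (by positivity) hc)

lemma anchors_subset : ∀ T : Finset S, anchors n c A hc hA T ⊆ T := by
  intro T
  induction T using Finset.strongInduction with
  | _ T ih =>
    rw [anchors]
    split_ifs with h
    · intro x hx
      rcases Finset.mem_insert.mp hx with rfl | hx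
      · exact hA T h
      · exact Finset.filter_subset _ _ (ih _ (filt_ssub n c A hc hA T h) hx)
    · simp

lemma anchors_nonempty (T : Finset S) (h : T.Nonempty) :
    (anchors n c A hc hA T).Nonempty := by
  rw [anchors, dif_pos h]; exact Finset.insert_nonempty _ _

lemma anchorPad_bounds (hAmax : ∀ T : Finset S, T.Nonempty → ∀ s ∈ T, n s ≤ n (A T)) :
    ∀ T : Finset S, ∀ s ∈ T,
      n s ≤ anchorPad n c A hc hA T s ∧
        (anchorPad n c A hc hA T s : ℝ) ≤ c * (n s : ℝ) := by
  intro T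
  induction T using Finset.strongInduction with
  | _ T ih =>
    intro s hs
    have h : T.Nonempty := ⟨s, hs⟩
    rw [anchorPad, dif_pos h]
    split_ifs with hcond
    · exact ⟨hAmax T h s hs, hcond.2⟩
    · have hs' : s ∈ T.filter fun s' => ¬((n (A T) : ℝ) ≤ c * (n s' : ℝ)) := by
        refine Finset.mem_filter.mpr ⟨hs, fun hle => hcond ⟨hs, hle⟩⟩
      exact ih _ (filt_ssub n c A hc hA T h) s hs'

lemma anchorPad_image_card (hAmax : ∀ T : Finset S, T.Nonempty → ∀ s ∈ T, n s ≤ n (A T)) :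
    ∀ T : Finset S,
      (T.image (anchorPad n c A hc hA T)).card = (anchors n c A hc hA T).card := by
  intro T
  induction T using Finset.strongInduction with
  | _ T ih =>
    by_cases h : T.Nonempty
    · set T' := T.filter fun s' => ¬((n (A T) : ℝ) ≤ c * (n s' : ℝ)) with hT'
      have hss : T' ⊂ T := filt_ssub n c A hc hA T h
      have hpad_mem : ∀ s ∈ T', anchorPad n c A hc hA T s = anchorPad n c A hc hA T' s := by
        intro s hs
        have := Finset.mem_filter.mp hs
        rw [anchorPad, dif_pos h, if_neg (fun hcond => this.2 hcond.2)]
      have himg : T.image (anchorPad n c A hc hA T)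
          = insert (n (A T)) (T'.image (anchorPad n c A hc hA T')) := by
        apply Finset.Subset.antisymm
        · intro x hx
          obtain ⟨s, hs, rfl⟩ := Finset.mem_image.mp hx
          rw [anchorPad, dif_pos h]
          split_ifs with hcond
          · exact Finset.mem_insert_self _ _
          · have hs' : s ∈ T' := Finset.mem_filter.mpr ⟨hs, fun hle => hcond ⟨hs, hle⟩⟩
            exact Finset.mem_insert_of_mem (Finset.mem_image_of_mem _ hs')
        · intro x hx
          rcases Finset.mem_insert.mp hx with rfl | hx
          · refine Finset.mem_image.mpr ⟨A T, hA T h, ?_⟩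
            rw [anchorPad, dif_pos h,
              if_pos ⟨hA T h, le_mul_of_one_le_left (by positivity) hc⟩]
          · obtain ⟨s, hs, rfl⟩ := Finset.mem_image.mp hx
            exact Finset.mem_image.mpr ⟨s, hss.1 hs, hpad_mem s hs⟩
      have hnotmem : n (A T) ∉ T'.image (anchorPad n c A hc hA T') := by
        intro hmem
        obtain ⟨s, hs, heq⟩ := Finset.mem_image.mp hmem
        have hb := (anchorPad_bounds n c A hc hA hAmax T' s hs).2
        have hlt : c * (n s : ℝ) < n (A T) :=
          lt_of_not_ge (Finset.mem_filter.mp hs).2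
        rw [heq] at hb
        exact absurd (lt_of_le_of_lt hb hlt) (lt_irrefl _)
      have hAnot : A T ∉ anchors n c A hc hA T' := by
        intro hmem
        have := Finset.mem_filter.mp (anchors_subset n c A hc hA T' hmem)
        exact this.2 (le_mul_of_one_le_left (by positivity) hc)
      rw [himg, Finset.card_insert_of_notMem hnotmem, anchors, dif_pos h,
        Finset.card_insert_of_notMem hAnot, ih T' hss]
    · rw [Finset.not_nonempty_iff_eq_empty] at h
      subst h
      rw [anchors, dif_neg (by simp)]
      simp

lemma anchors_sep :
    ∀ T : Finset S, ∀ a ∈ anchors n c A hc hA T, ∀ b ∈ anchors n c A hc hA T,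
      a ≠ b → c * (n a : ℝ) < n b ∨ c * (n b : ℝ) < n a := by
  intro T
  induction T using Finset.strongInduction with
  | _ T ih =>
    intro a ha b hb hab
    by_cases h : T.Nonempty
    · rw [anchors, dif_pos h] at ha hb
      set T' := T.filter fun s' => ¬((n (A T) : ℝ) ≤ c * (n s' : ℝ)) with hT'
      have key : ∀ x ∈ anchors n c A hc hA T', c * (n x : ℝ) < n (A T) := by
        intro x hx
        exact lt_of_not_ge (Finset.mem_filter.mp (anchors_subset n c A hc hA T' hx)).2
      rcases Finset.mem_insert.mp ha with rfl | ha
      · rcases Finset.mem_insert.mp hb with rfl | hb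
        · exact absurd rfl hab
        · exact Or.inr (key b hb)
      · rcases Finset.mem_insert.mp hb with rfl | hb
        · exact Or.inl (key a ha)
        · exact ih T' (filt_ssub n c A hc hA T h) a ha b hb hab
    · rw [Finset.not_nonempty_iff_eq_empty] at h
      subst h
      rw [anchors, dif_neg (by simp)] at ha
      simp at ha

end Lemmas

/-- A randomized padding scheme `q` is valid if `q s y = 0` whenever `y < n s` or
`y > c·n s`. -/
def ValidRand {S : Type*} (n : S → ℕ) (c : ℝ) (q : S → ℕ → ℝ) : Prop :=
  ∀ s (y : ℕ), (y < n s ∨ c * (n s : ℝ) < (y : ℝ)) → q s y = 0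

/-- the randomized scheme `q_Z` induced by the anchor scheme `Z` is a
valid randomized padding scheme with `I_∞(q_Z) = log₂ |anchors(S)|`, and every valid
randomized padding scheme `q` has `I_∞(q) ≥ log₂ |anchors(S)|`; here
`I_∞(q) = log₂ Σ_y max_{s : p s > 0} q s y`. -/
theorem stmt_12 {S : Type*} [Fintype S] [DecidableEq S] [Nonempty S]
    (n : S → ℕ) (hn : ∀ s, 1 ≤ n s)
    (p : S → ℝ) (hp : ∀ s, 0 < p s) (hsum : ∑ s, p s = 1)
    (c : ℝ) (hc : 1 ≤ c)
    (A : Finset S → S) (hA : ∀ T : Finset S, T.Nonempty → A T ∈ T)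
    (hAmax : ∀ T : Finset S, T.Nonempty → ∀ s ∈ T, n s ≤ n (A T))
    (qZ : S → ℕ → ℝ)
    (hqZ : ∀ s y, qZ s y = if y = anchorPad n c A hc hA Finset.univ s then 1 else 0) :
    ((∀ s y, 0 ≤ qZ s y) ∧ (∀ s, ∑' y, qZ s y = 1) ∧ ValidRand n c qZ) ∧
      Real.logb 2 (∑' y : ℕ, sSup ((fun s => qZ s y) '' {s : S | 0 < p s})) =
        Real.logb 2 ((anchors n c A hc hA Finset.univ).card : ℝ) ∧
      ∀ q : S → ℕ → ℝ, (∀ s y, 0 ≤ q s y) → (∀ s, ∑' y, q s y = 1) → ValidRand n c q →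
        Real.logb 2 ((anchors n c A hc hA Finset.univ).card : ℝ) ≤
          Real.logb 2 (∑' y : ℕ, sSup ((fun s => q s y) '' {s : S | 0 < p s})) := by
  set Z : S → ℕ := anchorPad n c A hc hA Finset.univ with hZ
  set K : Finset S := anchors n c A hc hA Finset.univ with hK
  have hset : {s : S | 0 < p s} = Set.univ := Set.eq_univ_of_forall fun s => hp s
  have hbZ : ∀ s : S, n s ≤ Z s ∧ (Z s : ℝ) ≤ c * (n s : ℝ) := fun s =>
    anchorPad_bounds n c A hc hA hAmax Finset.univ s (Finset.mem_univ s)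
  have hKcard : (Finset.univ.image Z).card = K.card :=
    anchorPad_image_card n c A hc hA hAmax Finset.univ
  have hKpos : 0 < K.card :=
    Finset.card_pos.mpr (anchors_nonempty n c A hc hA _ Finset.univ_nonempty)
  refine ⟨⟨?_, ?_, ?_⟩, ?_, ?_⟩
  · intro s y; rw [hqZ]; split_ifs <;> norm_num
  · intro s
    have : qZ s = fun y => if y = Z s then 1 else 0 := funext (hqZ s)
    rw [this]
    exact tsum_ite_eq (Z s) 1
  · intro s y hy
    rw [hqZ]
    rw [if_neg]
    rintro rfl
    rcases hy with hy | hy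
    · exact absurd (hbZ s).1 (not_le.mpr hy)
    · exact absurd (hbZ s).2 (not_le.mpr hy)
  · -- equality part
    congr 1
    have hf : ∀ y : ℕ, sSup ((fun s => qZ s y) '' {s : S | 0 < p s})
        = if y ∈ Finset.univ.image Z then 1 else 0 := by
      intro y
      rw [hset, Set.image_univ]
      split_ifs with hy
      · obtain ⟨s, _, hsy⟩ := Finset.mem_image.mp hy
        apply IsGreatest.csSup_eq
        constructor
        · exact ⟨s, by show qZ s y = 1; rw [hqZ, if_pos hsy.symm]⟩
        · rintro x ⟨s', rfl⟩
          show qZ s' y ≤ 1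
          rw [hqZ]; split_ifs <;> norm_num
      · have : (fun s => qZ s y) = fun _ : S => (0 : ℝ) := by
          funext s'
          rw [hqZ, if_neg]
          rintro rfl
          exact hy (Finset.mem_image_of_mem _ (Finset.mem_univ s'))
        rw [this, Set.range_const, csSup_singleton]
    calc (∑' y : ℕ, sSup ((fun s => qZ s y) '' {s : S | 0 < p s}))
        = ∑ y ∈ Finset.univ.image Z, sSup ((fun s => qZ s y) '' {s : S | 0 < p s}) := by
          apply tsum_eq_sum
          intro y hy
          rw [hf y, if_neg hy]
      _ = ∑ y ∈ Finset.univ.image Z, (1 : ℝ) := by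
          apply Finset.sum_congr rfl
          intro y hy
          rw [hf y, if_pos hy]
      _ = ((K.card : ℕ) : ℝ) := by rw [Finset.sum_const, nsmul_eq_mul, mul_one, hKcard]
  · -- lower bound part
    intro q hq0 hq1 hqv
    set g : ℕ → ℝ := fun y => sSup ((fun s => q s y) '' {s : S | 0 < p s}) with hg
    have hrange : ∀ y, ((fun s => q s y) '' {s : S | 0 < p s}) = Set.range (fun s => q s y) := by
      intro y; rw [hset, Set.image_univ]
    have hbdd : ∀ y, BddAbove (Set.range fun s => q s y) :=
      fun y => (Set.finite_range _).bddAbove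
    have hqg : ∀ s y, q s y ≤ g y := by
      intro s y
      rw [hg]; dsimp only
      rw [hrange y]
      exact le_csSup (hbdd y) ⟨s, rfl⟩
    have hg0 : ∀ y, 0 ≤ g y := fun y =>
      le_trans (hq0 (Classical.arbitrary S) y) (hqg _ y)
    have hqs : ∀ s, Summable (q s) := by
      intro s
      by_contra h
      have h1 := hq1 s
      rw [tsum_eq_zero_of_not_summable h] at h1
      norm_num at h1
    have hgle : ∀ y, g y ≤ ∑ s : S, q s y := by
      intro y
      rw [hg]; dsimp only; rw [hrange y]
      refine csSup_le (Set.range_nonempty _) ?_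
      rintro x ⟨s, rfl⟩
      exact Finset.single_le_sum (fun i _ => hq0 i y) (Finset.mem_univ s)
    have hgsum : Summable g :=
      Summable.of_nonneg_of_le hg0 hgle (by apply summable_sum; intro s _; exact hqs s)
    -- intervals
    set I : S → Finset ℕ := fun a => Finset.Icc (n a) ⌊c * (n a : ℝ)⌋₊ with hI
    have hdisj : (K : Set S).PairwiseDisjoint I := by
      intro a ha b hb hab
      have hsep := anchors_sep n c A hc hA Finset.univ a ha b hb hab
      show Disjoint (I a) (I b)
      rw [Finset.disjoint_left]
      intro y hya hyb
      rw [hI] at hya hyb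
      simp only [Finset.mem_Icc] at hya hyb
      have h1 : (y : ℝ) ≤ c * (n a : ℝ) := (Nat.le_floor_iff (by positivity)).mp hya.2
      have h2 : (y : ℝ) ≤ c * (n b : ℝ) := (Nat.le_floor_iff (by positivity)).mp hyb.2
      have h3 : (n a : ℝ) ≤ y := Nat.cast_le.mpr hya.1
      have h4 : (n b : ℝ) ≤ y := Nat.cast_le.mpr hyb.1
      rcases hsep with h | h
      · linarith
      · linarith
    have hinner : ∀ a ∈ K, (1 : ℝ) ≤ ∑ y ∈ I a, g y := by
      intro a _
      have hq_eq : ∑' y, q a y = ∑ y ∈ I a, q a y := by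
        apply tsum_eq_sum
        intro y hy
        rw [hI] at hy
        simp only [Finset.mem_Icc, not_and_or, not_le] at hy
        rcases hy with hy | hy
        · exact hqv a y (Or.inl hy)
        · exact hqv a y (Or.inr ((Nat.floor_lt (by positivity)).mp hy))
      have : (1 : ℝ) = ∑ y ∈ I a, q a y := by rw [← hq_eq, hq1 a]
      rw [this]
      exact Finset.sum_le_sum fun y _ => hqg a y
    have hmain : (K.card : ℝ) ≤ ∑' y, g y := by
      calc (K.card : ℝ) = ∑ a ∈ K, (1 : ℝ) := by
            rw [Finset.sum_const, nsmul_eq_mul, mul_one]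
        _ ≤ ∑ a ∈ K, ∑ y ∈ I a, g y := Finset.sum_le_sum hinner
        _ = ∑ y ∈ K.biUnion I, g y := (Finset.sum_biUnion hdisj).symm
        _ ≤ ∑' y, g y := Summable.sum_le_tsum _ (fun y _ => hg0 y) hgsum
    have hKpos' : (0 : ℝ) < K.card := by exact_mod_cast hKpos
    exact (Real.logb_le_logb (by norm_num) hKpos' (lt_of_lt_of_le hKpos' hmain)).mpr hmain
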